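/- Let S = {1/n : n ≥ 1} ∪ {0} with the metric inherited from ℝ, and let T : S → S be defined by T(0) = T(1) = 0 and T(1/n) = 1/(n-1) for n ≥ 2. Then the Markov operator P on Borel probability measures on S given by pushforward along T is asymptotically stable (the Dirac measure δ₀ is its unique invariant measure and Pⁿμ → δ₀ weakly for every probability measure μ), but P does not satisfy the e-property at the point 0; i.e., there exists a bounded Lipschitz function f on S such that limsup_{x→0} limsup_{n→∞} |Uⁿf(x) − Uⁿf(0)| > 0, where U is the dual operator (Uⁿf = f ∘ Tⁿ). -/

import Mathlib

open MeasureTheory Filter Topology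


section Aux
variable {Sset : Set ℝ} {T : ↥Sset → ↥Sset}

lemma aux_iter_zero (hT0 : ∀ x : ↥Sset, (x : ℝ) = 0 → ((T x : ℝ) = 0)) :
    ∀ (k : ℕ) (x : ↥Sset), (x:ℝ) = 0 → ((T^[k] x : ℝ)) = 0 := by
  intro k
  induction k with
  | zero => intro x hx; simpa using hx
  | succ k ih =>
    intro x hx
    rw [Function.iterate_succ_apply]
    exact ih _ (hT0 x hx)

lemma aux_iter_one
    (hTn : ∀ n : ℕ, 2 ≤ n → ∀ x : ↥Sset, (x : ℝ) = 1 / (n : ℝ) →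
      ((T x : ℝ) = 1 / ((n : ℝ) - 1))) :
    ∀ (m : ℕ) (x : ↥Sset), (x:ℝ) = 1/((m:ℝ)+1) → ((T^[m] x : ℝ)) = 1 := by
  intro m
  induction m with
  | zero => intro x hx; simpa using hx
  | succ m ih =>
    intro x hx
    rw [Function.iterate_succ_apply]
    apply ih
    have h2 : (2:ℕ) ≤ m + 2 := by omega
    have hx' : (x:ℝ) = 1 / ((m+2 : ℕ) : ℝ) := by rw [hx]; push_cast; ring_nf
    have := hTn (m+2) h2 x hx'
    rw [this]; push_cast; ring_nf

lemma aux_iter_ev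
    (hT0 : ∀ x : ↥Sset, (x : ℝ) = 0 → ((T x : ℝ) = 0))
    (hT1 : ∀ x : ↥Sset, (x : ℝ) = 1 → ((T x : ℝ) = 0))
    (hTn : ∀ n : ℕ, 2 ≤ n → ∀ x : ↥Sset, (x : ℝ) = 1 / (n : ℝ) →
      ((T x : ℝ) = 1 / ((n : ℝ) - 1))) :
    ∀ (m : ℕ) (x : ↥Sset), (x:ℝ) = 1/((m:ℝ)+1) → ∀ n, m+1 ≤ n → ((T^[n] x : ℝ)) = 0 := by
  intro m x hx n hn
  obtain ⟨k, rfl⟩ : ∃ k, n = k + (m+1) := ⟨n-(m+1), by omega⟩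
  rw [Function.iterate_add_apply]
  apply aux_iter_zero hT0
  rw [Function.iterate_succ_apply']
  exact hT1 _ (aux_iter_one hTn m x hx)

lemma aux_cases (hS : Sset = {0} ∪ {x : ℝ | ∃ n : ℕ, 1 ≤ n ∧ x = 1 / (n : ℝ)})
    (x : ↥Sset) : (x:ℝ) = 0 ∨ ∃ m : ℕ, (x:ℝ) = 1/((m:ℝ)+1) := by
  have hx : (x:ℝ) ∈ ({0} ∪ {x : ℝ | ∃ n : ℕ, 1 ≤ n ∧ x = 1 / (n : ℝ)} : Set ℝ) := by
    rw [← hS]; exact x.2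
  rcases hx with h | ⟨n, hn, h⟩
  · left; exact h
  · right
    exact ⟨n - 1, by rw [h]; congr 1; rw [Nat.cast_sub hn]; push_cast; ring⟩

lemma aux_pre (hS : Sset = {0} ∪ {x : ℝ | ∃ n : ℕ, 1 ≤ n ∧ x = 1 / (n : ℝ)})
    (hT0 : ∀ x : ↥Sset, (x : ℝ) = 0 → ((T x : ℝ) = 0))
    (hT1 : ∀ x : ↥Sset, (x : ℝ) = 1 → ((T x : ℝ) = 0))
    (hTn : ∀ n : ℕ, 2 ≤ n → ∀ x : ↥Sset, (x : ℝ) = 1 / (n : ℝ) →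
      ((T x : ℝ) = 1 / ((n : ℝ) - 1)))
    (n : ℕ) (a b : ↥Sset) (ha : (a:ℝ) = 1/((n:ℝ)+1)) (hb : (b:ℝ) = 1/((n:ℝ)+2)) :
    T ⁻¹' {a} = {b} := by
  ext x
  simp only [Set.mem_preimage, Set.mem_singleton_iff]
  have hpos : (0:ℝ) < 1/((n:ℝ)+1) := by positivity
  constructor
  · intro h
    have hTx : (T x:ℝ) = 1/((n:ℝ)+1) := by rw [h, ha]
    rcases aux_cases hS x with h0 | ⟨m, hm⟩
    · exfalso; rw [hT0 x h0] at hTx; linarith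
    · cases m with
      | zero =>
        exfalso
        have := hT1 x (by simpa using hm)
        rw [this] at hTx; linarith
      | succ k =>
        have h2 : (2:ℕ) ≤ k+2 := by omega
        have hx' : (x:ℝ) = 1 / ((k+2 : ℕ) : ℝ) := by rw [hm]; push_cast; ring_nf
        have hTx' := hTn (k+2) h2 x hx'
        have e : 1/((k:ℝ)+1) = 1/((n:ℝ)+1) := by
          rw [← hTx, hTx']; push_cast; ring_nf
        field_simp at e
        have hk : k = n := by exact_mod_cast (by linarith : (k:ℝ) = n)
        apply Subtype.ext
        rw [hm, hb, hk]; push_cast; ring_nf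
  · intro h
    rw [h]
    apply Subtype.ext
    have h2 : (2:ℕ) ≤ n+2 := by omega
    have hb' : (b:ℝ) = 1 / ((n+2 : ℕ) : ℝ) := by rw [hb]; push_cast; ring_nf
    have := hTn (n+2) h2 b hb'
    rw [this, ha]; push_cast; ring_nf

end Aux

/-- Example 1 of the paper: on `S = {1/n : n ≥ 1} ∪ {0} ⊆ ℝ`, the map with `T(0) = T(1) = 0`
and `T(1/n) = 1/(n-1)` for `n ≥ 2` induces a pushforward Markov operator which is
asymptotically stable (with unique invariant measure `δ₀`), yet fails the e-property at `0`:
there is a bounded Lipschitz `f` such that the family `{Uⁿf = f ∘ Tⁿ : n ∈ ℕ}` is not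
equicontinuous at `0`. -/
theorem stmt0
    (Sset : Set ℝ)
    (hS : Sset = {0} ∪ {x : ℝ | ∃ n : ℕ, 1 ≤ n ∧ x = 1 / (n : ℝ)})
    [MeasurableSpace ↥Sset] [BorelSpace ↥Sset]
    (T : ↥Sset → ↥Sset) (hTm : Measurable T)
    (hT0 : ∀ x : ↥Sset, (x : ℝ) = 0 → ((T x : ℝ) = 0))
    (hT1 : ∀ x : ↥Sset, (x : ℝ) = 1 → ((T x : ℝ) = 0))
    (hTn : ∀ n : ℕ, 2 ≤ n → ∀ x : ↥Sset, (x : ℝ) = 1 / (n : ℝ) →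
      ((T x : ℝ) = 1 / ((n : ℝ) - 1))) :
    -- asymptotic stability: δ₀ is the unique invariant probability measure and
    -- `Pⁿμ → δ₀` weakly for every probability measure μ
    (∀ z : ↥Sset, (z : ℝ) = 0 →
      (Measure.map T (Measure.dirac z) = Measure.dirac z) ∧
      (∀ μ : Measure ↥Sset, IsProbabilityMeasure μ → Measure.map T μ = μ →
        μ = Measure.dirac z) ∧
      (∀ μ : Measure ↥Sset, IsProbabilityMeasure μ →
        ∀ g : ↥Sset → ℝ, Continuous g → (∃ C, ∀ x, |g x| ≤ C) →
          Tendsto (fun n => ∫ x, g x ∂ (Measure.map (T^[n]) μ)) atTop (𝓝 (g z)))) ∧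
    -- failure of the e-property at 0: some bounded Lipschitz f for which the iterates
    -- `Uⁿf = f ∘ Tⁿ` are not equicontinuous at 0
    (∃ f : ↥Sset → ℝ, (∃ K, LipschitzWith K f) ∧ (∃ C, ∀ x, |f x| ≤ C) ∧
      ∀ z : ↥Sset, (z : ℝ) = 0 →
        ¬ (∀ ε > (0 : ℝ), ∃ δ > (0 : ℝ), ∀ x : ↥Sset, dist x z < δ →
            ∀ n : ℕ, |f (T^[n] x) - f (T^[n] z)| ≤ ε)) := by
  -- the family of points 1/(n+1)
  have hmem : ∀ m : ℕ, (1/((m:ℝ)+1)) ∈ Sset := by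
    intro m
    rw [hS]
    right
    exact ⟨m+1, by omega, by push_cast; ring_nf⟩
  set a : ℕ → ↥Sset := fun m => ⟨1/((m:ℝ)+1), hmem m⟩ with ha_def
  have haval : ∀ m, ((a m : ℝ)) = 1/((m:ℝ)+1) := fun m => rfl
  constructor
  · intro z hz
    have hTz : T z = z := Subtype.ext (by rw [hT0 z hz, hz])
    have hTkz : ∀ k, T^[k] z = z := by
      intro k
      exact Subtype.ext (by rw [aux_iter_zero hT0 k z hz, hz])
    refine ⟨by rw [Measure.map_dirac' hTm, hTz], ?_, ?_⟩
    · -- uniqueness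
      intro μ hprob hinv
      have hconst : ∀ n, μ {a n} = μ {a (n+1)} := by
        intro n
        have h1 : μ {a n} = μ (T ⁻¹' {a n}) := by
          conv_lhs => rw [← hinv]
          rw [Measure.map_apply hTm (measurableSet_singleton _)]
        rw [h1, aux_pre hS hT0 hT1 hTn n (a n) (a (n+1)) (haval n)
          (by rw [haval]; push_cast; ring_nf)]
      have hall : ∀ n, μ {a n} = μ {a 0} := by
        intro n
        induction n with
        | zero => rfl
        | succ n ih => rw [← hconst, ih]
      have hzero : μ {a 0} = 0 := by
        by_contra hne
        have hinj : Function.Injective a := by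
          intro i j hij
          have h2 : (1:ℝ)/((i:ℝ)+1) = 1/((j:ℝ)+1) := congrArg Subtype.val hij
          field_simp at h2
          exact_mod_cast (by linarith : (i:ℝ) = j)
        have hdisj : Pairwise (Function.onFun Disjoint fun n => ({a n} : Set ↥Sset)) := by
          intro i j hij
          simp only [Function.onFun, Set.disjoint_singleton]
          exact fun h => hij (hinj h)
        have hU := measure_iUnion (μ := μ) hdisj (fun n => measurableSet_singleton _)
        have htop : (∑' n : ℕ, μ {a n}) = ⊤ := by
          calc (∑' n : ℕ, μ {a n}) = ∑' _ : ℕ, μ {a 0} := by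
                exact tsum_congr (fun n => hall n)
            _ = ⊤ := ENNReal.tsum_const_eq_top_of_ne_zero hne
        rw [htop] at hU
        have hle : μ (⋃ n, {a n}) ≤ 1 := by
          rw [← measure_univ (μ := μ)]
          exact measure_mono (Set.subset_univ _)
        rw [hU] at hle
        simp at hle
      have hsing : ∀ n, μ {a n} = 0 := fun n => (hall n).trans hzero
      have hcompl : μ ({z}ᶜ) = 0 := by
        have hsub : ({z}ᶜ : Set ↥Sset) ⊆ ⋃ n, {a n} := by
          intro x hx
          rcases aux_cases hS x with h0 | ⟨m, hm⟩
          · exact absurd (Subtype.ext (h0.trans hz.symm)) hx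
          · exact Set.mem_iUnion.2 ⟨m, Subtype.ext hm⟩
        have hle : μ ({z}ᶜ) ≤ 0 :=
          calc μ ({z}ᶜ) ≤ μ (⋃ n, {a n}) := measure_mono hsub
            _ ≤ ∑' n, μ {a n} := measure_iUnion_le _
            _ = 0 := by simp [hsing]
        exact le_antisymm hle zero_le
      ext s hs
      rw [Measure.dirac_apply' _ hs]
      by_cases hzs : z ∈ s
      · rw [Set.indicator_of_mem hzs]
        have hc : μ sᶜ = 0 := by
          apply measure_mono_null _ hcompl
          intro x hx hxz
          rw [Set.mem_singleton_iff] at hxz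
          exact hx (hxz ▸ hzs)
        have := measure_add_measure_compl (μ := μ) hs
        rw [hc, add_zero, measure_univ] at this
        simpa using this
      · rw [Set.indicator_of_notMem hzs]
        apply measure_mono_null _ hcompl
        intro x hx hxz
        rw [Set.mem_singleton_iff] at hxz
        exact hzs (hxz ▸ hx)
    · -- convergence
      rintro μ hprob g hg ⟨C, hC⟩
      have hgm : Measurable g := hg.measurable
      have key : ∀ n : ℕ, ∫ x, g x ∂(Measure.map (T^[n]) μ) = ∫ x, g (T^[n] x) ∂μ := by
        intro n
        exact integral_map (hTm.iterate n).aemeasurable hg.aestronglyMeasurable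
      simp only [key]
      have hlim : ∀ x : ↥Sset, Tendsto (fun n => g (T^[n] x)) atTop (𝓝 (g z)) := by
        intro x
        have hev : ∃ N, ∀ n, N ≤ n → (T^[n] x : ℝ) = 0 := by
          rcases aux_cases hS x with h0 | ⟨m, hm⟩
          · exact ⟨0, fun n _ => aux_iter_zero hT0 n x h0⟩
          · exact ⟨m+1, fun n hn => aux_iter_ev hT0 hT1 hTn m x hm n hn⟩
        obtain ⟨N, hN⟩ := hev
        apply Tendsto.congr' (f₁ := fun _ => g z) _ tendsto_const_nhds
        filter_upwards [eventually_ge_atTop N] with n hn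
        congr 1
        exact Subtype.ext ((hz.trans (hN n hn).symm))
      have := tendsto_integral_of_dominated_convergence (μ := μ) (F := fun n x => g (T^[n] x))
        (f := fun _ => g z) (bound := fun _ => C)
        (fun n => (hgm.comp (hTm.iterate n)).aestronglyMeasurable)
        (integrable_const C)
        (fun n => Eventually.of_forall (fun x => by rw [Real.norm_eq_abs]; exact hC _))
        (Eventually.of_forall hlim)
      simpa [integral_const] using this
  · -- e-property failure
    refine ⟨fun x => (x : ℝ), ⟨1, LipschitzWith.subtype_val Sset⟩, ⟨1, ?_⟩, ?_⟩
    · intro x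
      show |(x:ℝ)| ≤ 1
      rcases aux_cases hS x with h0 | ⟨m, hm⟩
      · rw [h0]; norm_num
      · rw [hm]
        rw [abs_of_pos (by positivity)]
        rw [div_le_one (by positivity)]
        have : (0:ℝ) ≤ (m:ℝ) := Nat.cast_nonneg m
        linarith
    · intro z hz hcon
      obtain ⟨δ, hδ, hδ'⟩ := hcon (1/2) (by norm_num)
      obtain ⟨m, hm⟩ := exists_nat_one_div_lt hδ
      have hdist : dist (a m) z < δ := by
        rw [Subtype.dist_eq, Real.dist_eq, hz, haval, sub_zero,
          abs_of_pos (by positivity)]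
        exact hm
      have h1 : |((T^[m] (a m) : ℝ)) - ((T^[m] z : ℝ))| ≤ 1/2 := hδ' (a m) hdist m
      rw [aux_iter_one hTn m (a m) (haval m),
        aux_iter_zero hT0 m z hz] at h1
      norm_num at h1
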